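/- Let α be irrational with convergents p_k/q_k and δ_ℓ = (-1)^ℓ(q_ℓ α - p_ℓ). For any integer N ≥ 0 with Ostrowski expansion N = ∑_{k≥0} b_k q_k (where 0 ≤ b_0 ≤ a_1 - 1, 0 ≤ b_k ≤ a_{k+1}, and b_{k-1} = 0 whenever b_k = a_{k+1}), the quantity ε_k(N) := q_k ∑_{ℓ=k+1}^∞ (-1)^{k+ℓ} b_ℓ δ_ℓ satisfies -q_k(δ_k - δ_{k+1}) ≤ ε_k(N) ≤ q_k δ_{k+1} whenever b_k > 0. -/

import Mathlib

/-- Bounds `-q_k(δ_k - δ_{k+1}) ≤ ε_k(N) ≤ q_k δ_{k+1}` on the Ostrowski tail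
    `ε_k(N) = q_k ∑_{ℓ>k} (-1)^{k+ℓ} b_ℓ δ_ℓ`, valid whenever the digit `b_k` is positive. -/
theorem ostrowski_tail_bounds (a q : ℕ → ℕ) (δ : ℕ → ℝ) (K : ℕ)
    (ha : ∀ k, 1 ≤ k → 1 ≤ a k) (hq : ∀ k, 0 < q k)
    (hδpos : ∀ k, 0 < δ k)
    (hδrec : ∀ ℓ, 2 ≤ ℓ → δ ℓ = -(a ℓ : ℝ) * δ (ℓ - 1) + δ (ℓ - 2))
    (b : ℕ → ℕ)
    (hb0 : b 0 ≤ a 1 - 1)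
    (hbk : ∀ k, 1 ≤ k → b k ≤ a (k + 1))
    (hrule : ∀ k, 1 ≤ k → b k = a (k + 1) → b (k - 1) = 0)
    (hsupp : ∀ k, K ≤ k → b k = 0)
    (k : ℕ) (hbkpos : 0 < b k) :
    -(q k : ℝ) * (δ k - δ (k + 1)) ≤
        (q k : ℝ) * ∑ ℓ ∈ Finset.Ioc k K, (-1 : ℝ) ^ (k + ℓ) * (b ℓ : ℝ) * δ ℓ ∧
    (q k : ℝ) * ∑ ℓ ∈ Finset.Ioc k K, (-1 : ℝ) ^ (k + ℓ) * (b ℓ : ℝ) * δ ℓ ≤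
        (q k : ℝ) * δ (k + 1) := by
  have hsplit : ∀ j, j < K →
      (∑ ℓ ∈ Finset.Ioc j K, (-1 : ℝ) ^ (j + ℓ) * (b ℓ : ℝ) * δ ℓ)
        = -((b (j+1) : ℝ) * δ (j+1))
          - ∑ ℓ ∈ Finset.Ioc (j+1) K, (-1 : ℝ) ^ ((j+1) + ℓ) * (b ℓ : ℝ) * δ ℓ := by
    intro j hj
    have h1 : Finset.Ioc j K = Finset.Icc (j+1) K := by
      ext x; simp only [Finset.mem_Ioc, Finset.mem_Icc]; omega
    have h2 : Finset.Icc (j+1) K = Finset.cons (j+1) (Finset.Ioc (j+1) K) (by simp) :=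
      Finset.Icc_eq_cons_Ioc (by omega)
    rw [h1, h2, Finset.sum_cons]
    have hodd : (-1:ℝ) ^ (j + (j+1)) = -1 := by
      have h3 : j + (j+1) = 2*j+1 := by omega
      rw [h3, pow_succ, pow_mul]; norm_num
    rw [hodd]
    have h4 : ∀ ℓ ∈ Finset.Ioc (j+1) K,
        (-1 : ℝ) ^ (j + ℓ) * (b ℓ : ℝ) * δ ℓ
          = -((-1 : ℝ) ^ ((j+1) + ℓ) * (b ℓ : ℝ) * δ ℓ) := by
      intro ℓ _
      have h5 : (-1:ℝ) ^ ((j+1) + ℓ) = -(-1:ℝ) ^ (j + ℓ) := by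
        rw [show (j+1) + ℓ = (j + ℓ) + 1 from by omega, pow_succ]; ring
      rw [h5]; ring
    rw [Finset.sum_congr rfl h4, Finset.sum_neg_distrib]
    ring
  have key : ∀ n j, K ≤ j + n →
      -δ j ≤ (∑ ℓ ∈ Finset.Ioc j K, (-1 : ℝ) ^ (j + ℓ) * (b ℓ : ℝ) * δ ℓ) ∧
      (∑ ℓ ∈ Finset.Ioc j K, (-1 : ℝ) ^ (j + ℓ) * (b ℓ : ℝ) * δ ℓ) ≤ δ (j+1) := by
    intro n
    induction n with
    | zero =>
      intro j hj
      rw [Finset.Ioc_eq_empty (by omega : ¬ j < K), Finset.sum_empty]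
      exact ⟨neg_nonpos.mpr (hδpos j).le, (hδpos (j+1)).le⟩
    | succ n ih =>
      intro j hj
      rcases le_or_gt K j with h | h
      · rw [Finset.Ioc_eq_empty (by omega : ¬ j < K), Finset.sum_empty]
        exact ⟨neg_nonpos.mpr (hδpos j).le, (hδpos (j+1)).le⟩
      · rw [hsplit j h]
        obtain ⟨ih1, ih2⟩ := ih (j+1) (by omega)
        have hdr : δ (j+2) = -(a (j+2):ℝ) * δ (j+1) + δ j := hδrec (j+2) (by omega)
        have hble : (b (j+1):ℝ) ≤ (a (j+2):ℝ) := by exact_mod_cast hbk (j+1) (by omega)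
        have hb0' : (0:ℝ) ≤ (b (j+1):ℝ) := by positivity
        constructor
        · nlinarith [mul_le_mul_of_nonneg_right hble (hδpos (j+1)).le, ih2]
        · nlinarith [mul_nonneg hb0' (hδpos (j+1)).le, ih1]
  have hkK : k < K := by
    by_contra h
    have := hsupp k (by omega)
    omega
  obtain ⟨hk1, hk2⟩ := key K k (by omega)
  obtain ⟨hk1', hk2'⟩ := key K (k+1) (by omega)
  have hs := hsplit k hkK
  have hbk1 : b (k+1) + 1 ≤ a (k+2) := by
    have h1 : b (k+1) ≤ a (k+2) := hbk (k+1) (by omega)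
    rcases eq_or_lt_of_le h1 with h2 | h2
    · have h2' : b (k+1) = a (k+2) := h2
      have h3 : b k = 0 := hrule (k+1) (by omega) h2
      omega
    · omega
  have hble : (b (k+1):ℝ) ≤ (a (k+2):ℝ) - 1 := by
    have : ((b (k+1) : ℕ) : ℝ) + 1 ≤ ((a (k+2) : ℕ) : ℝ) := by exact_mod_cast hbk1
    linarith
  have hdr : δ (k+2) = -(a (k+2):ℝ) * δ (k+1) + δ k := hδrec (k+2) (by omega)
  have hq0 : (0:ℝ) ≤ (q k : ℝ) := by positivity
  constructor
  · have hlow : -(δ k - δ (k+1)) ≤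
        ∑ ℓ ∈ Finset.Ioc k K, (-1 : ℝ) ^ (k + ℓ) * (b ℓ : ℝ) * δ ℓ := by
      rw [hs]
      nlinarith [mul_le_mul_of_nonneg_right hble (hδpos (k+1)).le, hk2']
    nlinarith [mul_le_mul_of_nonneg_left hlow hq0]
  · exact mul_le_mul_of_nonneg_left hk2 hq0
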